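/- For every angle α ∈ ℝ there exist a bijection β : ℤ² → ℤ² and a constant C ≥ 0 such that for all v ∈ ℤ², the Euclidean distance between β(v) (viewed as a point of ℝ²) and R_α(v) is at most C, where R_α : ℝ² → ℝ² is the rotation by angle α about the origin, R_α(x,y) = (x·cos α − y·sin α, x·sin α + y·cos α). In particular, every (e.g. irrational) rotation of the plane about the origin agrees with a bijection of the integer lattice ℤ² up to uniformly bounded error. -/

import Mathlib

/-- The point of the plane (modelled on `ℂ`) corresponding to a lattice point of `ℤ²`. -/
noncomputable def latticePt (v : ℤ × ℤ) : ℂ :=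
  ((v.1 : ℝ) : ℂ) + ((v.2 : ℝ) : ℂ) * Complex.I

/-- The image of the lattice point `v ∈ ℤ²` under the rotation of the plane by angle `α`
about the origin: `R_α(x,y) = (x·cos α − y·sin α, x·sin α + y·cos α)`. -/
noncomputable def rotLatticePt (α : ℝ) (v : ℤ × ℤ) : ℂ :=
  (((v.1 : ℝ) * Real.cos α - (v.2 : ℝ) * Real.sin α : ℝ) : ℂ) +
    (((v.1 : ℝ) * Real.sin α + (v.2 : ℝ) * Real.cos α : ℝ) : ℂ) * Complex.I

/-- Every rotation of the plane about the origin agrees with a bijection of the integer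
lattice `ℤ²` up to uniformly bounded error: for every angle `α` there are a bijection
`β : ℤ² → ℤ²` and a constant `C ≥ 0` with `dist (β v) (R_α v) ≤ C` for all `v ∈ ℤ²`. -/

noncomputable def shearXE (t : ℝ) : ℤ × ℤ ≃ ℤ × ℤ where
  toFun v := (v.1 + ⌊t * (v.2 : ℝ)⌋, v.2)
  invFun v := (v.1 - ⌊t * (v.2 : ℝ)⌋, v.2)
  left_inv v := by simp
  right_inv v := by simp

noncomputable def shearYE (s : ℝ) : ℤ × ℤ ≃ ℤ × ℤ where
  toFun v := (v.1, v.2 + ⌊s * (v.1 : ℝ)⌋)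
  invFun v := (v.1, v.2 - ⌊s * (v.1 : ℝ)⌋)
  left_inv v := by simp
  right_inv v := by simp

def negE : ℤ × ℤ ≃ ℤ × ℤ where
  toFun v := (-v.1, -v.2)
  invFun v := (-v.1, -v.2)
  left_inv v := by simp
  right_inv v := by simp

noncomputable def sX (t : ℝ) (z : ℂ) : ℂ := z + ((t * z.im : ℝ) : ℂ)
noncomputable def sY (s : ℝ) (z : ℂ) : ℂ := z + ((s * z.re : ℝ) : ℂ) * Complex.I

@[simp] lemma sX_re (t : ℝ) (z : ℂ) : (sX t z).re = z.re + t * z.im := by simp [sX]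
@[simp] lemma sX_im (t : ℝ) (z : ℂ) : (sX t z).im = z.im := by simp [sX]
@[simp] lemma sY_re (s : ℝ) (z : ℂ) : (sY s z).re = z.re := by simp [sY]
@[simp] lemma sY_im (s : ℝ) (z : ℂ) : (sY s z).im = z.im + s * z.re := by simp [sY]

lemma floor_abs_le (x : ℝ) : |(⌊x⌋ : ℝ) - x| ≤ 1 := by
  rw [abs_sub_comm, Int.self_sub_floor, abs_of_nonneg (Int.fract_nonneg _)]
  exact (Int.fract_lt_one _).le

lemma dist_sX_lattice (t : ℝ) (v : ℤ × ℤ) :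
    dist (latticePt ((shearXE t) v)) (sX t (latticePt v)) ≤ 1 := by
  have h : latticePt ((shearXE t) v) - sX t (latticePt v)
      = (((⌊t * (v.2:ℝ)⌋ : ℝ) - t * (v.2:ℝ) : ℝ) : ℂ) := by
    simp [latticePt, sX, shearXE]
    push_cast
    ring
  rw [Complex.dist_eq, h, Complex.norm_real, Real.norm_eq_abs]
  exact floor_abs_le _

lemma dist_sY_lattice (s : ℝ) (v : ℤ × ℤ) :
    dist (latticePt ((shearYE s) v)) (sY s (latticePt v)) ≤ 1 := by
  have h : latticePt ((shearYE s) v) - sY s (latticePt v)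
      = (((⌊s * (v.1:ℝ)⌋ : ℝ) - s * (v.1:ℝ) : ℝ) : ℂ) * Complex.I := by
    simp [latticePt, sY, shearYE]
    push_cast
    ring
  rw [Complex.dist_eq, h, norm_mul, Complex.norm_I, mul_one, Complex.norm_real, Real.norm_eq_abs]
  exact floor_abs_le _

lemma sX_lip (t : ℝ) (z w : ℂ) : dist (sX t z) (sX t w) ≤ (1 + |t|) * dist z w := by
  have h : sX t z - sX t w = (z - w) + ((t * (z.im - w.im) : ℝ) : ℂ) := by
    simp only [sX]; push_cast; ring
  have h2 : |z.im - w.im| ≤ ‖z - w‖ := by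
    rw [← Complex.sub_im]; exact Complex.abs_im_le_norm _
  rw [Complex.dist_eq, Complex.dist_eq, h]
  calc ‖(z - w) + ((t * (z.im - w.im) : ℝ) : ℂ)‖
      ≤ ‖z - w‖ + ‖((t * (z.im - w.im) : ℝ) : ℂ)‖ :=
        norm_add_le _ _
    _ ≤ ‖z - w‖ + |t| * ‖z - w‖ := by
        rw [Complex.norm_real, Real.norm_eq_abs, abs_mul]
        nlinarith [abs_nonneg t]
    _ = (1 + |t|) * ‖z - w‖ := by ring

lemma sY_lip (s : ℝ) (z w : ℂ) : dist (sY s z) (sY s w) ≤ (1 + |s|) * dist z w := by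
  have h : sY s z - sY s w = (z - w) + ((s * (z.re - w.re) : ℝ) : ℂ) * Complex.I := by
    simp only [sY]; push_cast; ring
  have h2 : |z.re - w.re| ≤ ‖z - w‖ := by
    rw [← Complex.sub_re]; exact Complex.abs_re_le_norm _
  rw [Complex.dist_eq, Complex.dist_eq, h]
  calc ‖(z - w) + ((s * (z.re - w.re) : ℝ) : ℂ) * Complex.I‖
      ≤ ‖z - w‖ + ‖((s * (z.re - w.re) : ℝ) : ℂ) * Complex.I‖ :=
        norm_add_le _ _
    _ ≤ ‖z - w‖ + |s| * ‖z - w‖ := by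
        rw [norm_mul, Complex.norm_I, mul_one, Complex.norm_real, Real.norm_eq_abs, abs_mul]
        nlinarith [abs_nonneg s]
    _ = (1 + |s|) * ‖z - w‖ := by ring

noncomputable def rotC (α : ℝ) : ℂ :=
  ((Real.cos α : ℝ) : ℂ) + ((Real.sin α : ℝ) : ℂ) * Complex.I

lemma shear_rot (α : ℝ) (hc : Real.cos (α/2) ≠ 0) (z : ℂ) :
    sX (-Real.tan (α/2)) (sY (Real.sin α) (sX (-Real.tan (α/2)) z)) = rotC α * z := by
  have hpy : Real.sin (α/2) ^ 2 + Real.cos (α/2) ^ 2 = 1 := Real.sin_sq_add_cos_sq _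
  have hs : Real.sin α = 2 * Real.sin (α/2) * Real.cos (α/2) := by
    rw [show α = 2 * (α/2) by ring, Real.sin_two_mul]; ring_nf
  have hcos : Real.cos α = 2 * Real.cos (α/2) ^ 2 - 1 := by
    rw [show α = 2 * (α/2) by ring, Real.cos_two_mul]; ring_nf
  have ht : Real.tan (α/2) = Real.sin (α/2) / Real.cos (α/2) := Real.tan_eq_sin_div_cos _
  apply Complex.ext <;>
    simp only [sX_re, sX_im, sY_re, sY_im, rotC, Complex.add_re, Complex.add_im,
      Complex.mul_re, Complex.mul_im, Complex.ofReal_re, Complex.ofReal_im,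
      Complex.I_re, Complex.I_im, mul_zero, mul_one, zero_mul, sub_zero, zero_add,
      add_zero, zero_sub, neg_mul] <;>
    rw [hs, hcos, ht] <;>
    field_simp
  · linear_combination (2*z.im*Real.sin (α/2) - 2*z.re*Real.cos (α/2)) * hpy
  · linear_combination (-2*z.im) * hpy
lemma rotLatticePt_eq (α : ℝ) (v : ℤ × ℤ) :
    rotLatticePt α v = rotC α * latticePt v := by
  simp only [rotLatticePt, rotC, latticePt]
  push_cast
  linear_combination (-((v.2:ℂ) * Complex.sin (α:ℂ))) * Complex.I_sq

theorem rotation_coarsely_equivalent_to_lattice_bijection (α : ℝ) :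
    ∃ (β : ℤ × ℤ ≃ ℤ × ℤ) (C : ℝ), 0 ≤ C ∧
      ∀ v : ℤ × ℤ, dist (latticePt (β v)) (rotLatticePt α v) ≤ C := by
  have hπ := Real.pi_pos
  set k : ℤ := round (α / Real.pi) with hk
  set α' : ℝ := α - k * Real.pi with hα'
  have hbound : |α'| ≤ Real.pi / 2 := by
    have h1 : |α / Real.pi - k| ≤ 1/2 := abs_sub_round _
    have h2 : α' = (α / Real.pi - k) * Real.pi := by
      rw [hα']; field_simp
    rw [h2, abs_mul, abs_of_pos hπ]
    nlinarith [abs_nonneg (α / Real.pi - (k:ℝ))]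
  have hc : 0 < Real.cos (α'/2) := by
    apply Real.cos_pos_of_mem_Ioo
    have h := abs_le.1 hbound
    constructor
    · linarith [h.1]
    · linarith [h.2]
  set t : ℝ := -Real.tan (α'/2) with htdef
  set s : ℝ := Real.sin α' with hsdef
  set ε : ℂ := (((-1 : ℝ)^k : ℝ) : ℂ) with hε
  have hrot' : ∀ v : ℤ × ℤ, rotLatticePt α v = ε * rotLatticePt α' v := by
    intro v
    have hA : α = α' + (k : ℝ) * Real.pi := by rw [hα']; ring
    have hcos : Real.cos α = (-1:ℝ)^k * Real.cos α' := by
      rw [hA]; exact Real.cos_add_int_mul_pi _ _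
    have hsin : Real.sin α = (-1:ℝ)^k * Real.sin α' := by
      rw [hA]; exact Real.sin_add_int_mul_pi _ _
    simp only [rotLatticePt, hcos, hsin, hε]
    push_cast
    ring
  set signE : ℤ × ℤ ≃ ℤ × ℤ := if Even k then Equiv.refl (ℤ × ℤ) else negE with hsE
  have hsign : ∀ w : ℤ × ℤ, latticePt (signE w) = ε * latticePt w := by
    intro w
    by_cases hek : Even k
    · have : ((-1:ℝ)^k) = 1 := hek.neg_one_zpow
      simp [hsE, hek, hε, this]
    · have : ((-1:ℝ)^k) = -1 := (Int.not_even_iff_odd.mp hek).neg_one_zpow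
      simp only [hsE, if_neg hek, hε, this]
      simp [negE, latticePt]
      push_cast
      ring
  have hεabs : ‖ε‖ = 1 := by
    rcases Int.even_or_odd k with hek | hok
    · rw [hε, hek.neg_one_zpow]; simp
    · rw [hε, hok.neg_one_zpow]; simp
  refine ⟨(((shearXE t).trans (shearYE s)).trans (shearXE t)).trans signE,
    1 + (1 + |t|) + (1 + |t|) * (1 + |s|), by positivity, ?_⟩
  intro v
  set v1 := shearXE t v with hv1
  set v2 := shearYE s v1 with hv2
  set v3 := shearXE t v2 with hv3
  have happ : ((((shearXE t).trans (shearYE s)).trans (shearXE t)).trans signE) v = signE v3 := rfl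
  have hkey : dist (latticePt v3) (rotLatticePt α' v) ≤
      1 + (1 + |t|) + (1 + |t|) * (1 + |s|) := by
    have heq : rotLatticePt α' v = sX t (sY s (sX t (latticePt v))) := by
      rw [rotLatticePt_eq, ← shear_rot α' (ne_of_gt hc)]
    rw [heq]
    calc dist (latticePt v3) (sX t (sY s (sX t (latticePt v))))
        ≤ dist (latticePt v3) (sX t (latticePt v2)) +
          dist (sX t (latticePt v2)) (sX t (sY s (latticePt v1))) +
          dist (sX t (sY s (latticePt v1))) (sX t (sY s (sX t (latticePt v)))) :=
          dist_triangle4 _ _ _ _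
      _ ≤ 1 + (1 + |t|) + (1 + |t|) * (1 + |s|) := by
          have b1 : dist (latticePt v3) (sX t (latticePt v2)) ≤ 1 := dist_sX_lattice t v2
          have b2 : dist (sX t (latticePt v2)) (sX t (sY s (latticePt v1))) ≤ 1 + |t| := by
            calc dist (sX t (latticePt v2)) (sX t (sY s (latticePt v1)))
                ≤ (1 + |t|) * dist (latticePt v2) (sY s (latticePt v1)) := sX_lip _ _ _
              _ ≤ (1 + |t|) * 1 := by
                  gcongr
                  exact dist_sY_lattice s v1
              _ = 1 + |t| := mul_one _
          have b3 : dist (sX t (sY s (latticePt v1))) (sX t (sY s (sX t (latticePt v)))) ≤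
              (1 + |t|) * (1 + |s|) := by
            calc dist (sX t (sY s (latticePt v1))) (sX t (sY s (sX t (latticePt v))))
                ≤ (1 + |t|) * dist (sY s (latticePt v1)) (sY s (sX t (latticePt v))) := sX_lip _ _ _
              _ ≤ (1 + |t|) * ((1 + |s|) * dist (latticePt v1) (sX t (latticePt v))) := by
                  gcongr
                  exact sY_lip _ _ _
              _ ≤ (1 + |t|) * ((1 + |s|) * 1) := by
                  gcongr
                  exact dist_sX_lattice t v
              _ = (1 + |t|) * (1 + |s|) := by ring
          linarith
  rw [happ, hsign, hrot' v]
  have hdist : dist (ε * latticePt v3) (ε * rotLatticePt α' v) =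
      dist (latticePt v3) (rotLatticePt α' v) := by
    rw [Complex.dist_eq, Complex.dist_eq, ← mul_sub, norm_mul, hεabs, one_mul]
  rw [hdist]
  exact hkey
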